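/- Let c ∈ ℂ with B(c) ≠ 0. Then c is a common zero of the sequence (W_n) if and only if Δ(c) ≠ 0 and there exist positive integers p and r with v^p = 1 and v^r = u, where u = g⁻(c)/g⁺(c) and v = (A(c)+√Δ(c))/(A(c)−√Δ(c)). -/

import Mathlib

lemma key1 (a b w s : ℂ) (hs : s ^ 2 = a ^ 2 + 4 * b) (x : ℕ → ℂ)
    (hx0 : x 0 = 1) (hx1 : x 1 = w)
    (hrec : ∀ n, x (n + 2) = a * x (n + 1) + b * x n) (n : ℕ) :
    s * x n = ((2*w - a + s)/2) * ((a+s)/2)^n - ((2*w - a - s)/2) * ((a-s)/2)^n := by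
  induction n using Nat.twoStepInduction with
  | zero => rw [hx0]; ring
  | one => rw [hx1]; ring
  | more n ih ih' =>
    rw [hrec n]
    linear_combination a * ih' + b * ih -
      (((2*w - a + s)/2 * ((a+s)/2)^n - (2*w - a - s)/2 * ((a-s)/2)^n)/4) * hs

lemma key0 (a b w : ℂ) (h0 : a ^ 2 + 4 * b = 0) (x : ℕ → ℂ)
    (hx0 : x 0 = 1) (hx1 : x 1 = w)
    (hrec : ∀ n, x (n + 2) = a * x (n + 1) + b * x n) (n : ℕ) :
    (a/2) * x n = (a/2 + (w - a/2) * n) * (a/2)^n := by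
  induction n using Nat.twoStepInduction with
  | zero => rw [hx0]; push_cast; ring
  | one => rw [hx1]; push_cast; ring
  | more n ih ih' =>
    rw [hrec n]
    push_cast at ih' ⊢
    linear_combination a * ih' + b * ih + ((a/2 + (w - a/2) * n) * (a/2)^n / 4) * h0

theorem stmt_7 (A B : Polynomial ℂ) (W : ℕ → Polynomial ℂ) (hW0 : W 0 = 1)
    (hrec : ∀ n, 2 ≤ n → W n = A * W (n - 1) + B * W (n - 2))
    (c s : ℂ) (hB : B.eval c ≠ 0)
    (hs : s ^ 2 = A.eval c ^ 2 + 4 * B.eval c) :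
    (∃ i j : ℕ, i ≠ j ∧ (W i).eval c = 0 ∧ (W j).eval c = 0) ↔
      (A.eval c ^ 2 + 4 * B.eval c ≠ 0 ∧
        ∃ p r : ℕ, 0 < p ∧ 0 < r ∧
          ((A.eval c + s) / (A.eval c - s)) ^ p = 1 ∧
          ((A.eval c + s) / (A.eval c - s)) ^ r =
            ((2 * (W 1).eval c - A.eval c - s) / 2) /
              ((2 * (W 1).eval c - A.eval c + s) / 2)) := by
  set a := A.eval c with ha
  set b := B.eval c with hb
  set w := (W 1).eval c with hw
  set x : ℕ → ℂ := fun n => (W n).eval c with hx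
  have hx0 : x 0 = 1 := by simp [hx, hW0]
  have hx1 : x 1 = w := rfl
  have hxrec : ∀ n, x (n + 2) = a * x (n + 1) + b * x n := by
    intro n
    have h := hrec (n + 2) (by omega)
    simp only [hx, Nat.add_sub_cancel, show n + 2 - 2 = n from by omega] at h ⊢
    rw [h]
    simp
    rfl
  by_cases h0 : a ^ 2 + 4 * b = 0
  · -- degenerate case: Δ = 0, no two distinct zeros
    constructor
    · rintro ⟨i, j, hij, hi, hj⟩
      exfalso
      have hα : (a / 2) ^ 2 = -b := by linear_combination h0 / 4
      have hα0 : a / 2 ≠ 0 := by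
        intro h
        rw [h] at hα
        simp at hα
        exact hB hα
      have hzi := key0 a b w h0 x hx0 hx1 hxrec i
      have hzj := key0 a b w h0 x hx0 hx1 hxrec j
      have hi' : x i = 0 := hi
      have hj' : x j = 0 := hj
      rw [hi', mul_zero] at hzi
      rw [hj', mul_zero] at hzj
      have hpi : a / 2 + (w - a / 2) * i = 0 := by
        have := mul_eq_zero.1 hzi.symm
        rcases this with h | h
        · exact h
        · exact absurd h (pow_ne_zero _ hα0)
      have hpj : a / 2 + (w - a / 2) * j = 0 := by
        have := mul_eq_zero.1 hzj.symm
        rcases this with h | h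
        · exact h
        · exact absurd h (pow_ne_zero _ hα0)
      have hwα : w - a / 2 ≠ 0 := by
        intro h
        rw [h] at hpi
        simp at hpi
        exact hα0 (by rw [hpi]; norm_num)
      have : (i : ℂ) = j := by
        have := mul_left_cancel₀ hwα (by linear_combination hpi - hpj : (w - a/2) * i = (w - a/2) * j)
        exact this
      exact hij (Nat.cast_injective this)
    · rintro ⟨h, _⟩
      exact absurd h0 h
  · -- nondegenerate case
    have hs0 : s ≠ 0 := by
      intro h
      rw [h] at hs
      exact h0 (by linear_combination -hs)
    set α := (a + s) / 2 with hαdef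
    set β := (a - s) / 2 with hβdef
    set gp := (2 * w - a + s) / 2 with hgp
    set gm := (2 * w - a - s) / 2 with hgm
    have hαβ : α * β = -b := by rw [hαdef, hβdef]; linear_combination -hs / 4
    have hα0 : α ≠ 0 := by
      intro h; rw [h, zero_mul] at hαβ; exact hB (neg_eq_zero.mp hαβ.symm)
    have hβ0 : β ≠ 0 := by
      intro h; rw [h, mul_zero] at hαβ; exact hB (neg_eq_zero.mp hαβ.symm)
    have has : a - s ≠ 0 := by
      intro h; exact hβ0 (by rw [hβdef, h]; norm_num)
    set v := (a + s) / (a - s) with hvdef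
    have hv0 : v ≠ 0 := div_ne_zero (fun h => hα0 (by rw [hαdef, h]; norm_num)) has
    have hvβ : v * β = α := by
      rw [hvdef, hαdef, hβdef]; field_simp
    have hvn : ∀ n : ℕ, v ^ n * β ^ n = α ^ n := by
      intro n; rw [← mul_pow, hvβ]
    have hzero : ∀ n : ℕ, x n = 0 ↔ gp * v ^ n = gm := by
      intro n
      have hk := key1 a b w s hs x hx0 hx1 hxrec n
      constructor
      · intro h
        rw [h, mul_zero] at hk
        have : gp * α ^ n = gm * β ^ n := by linear_combination -hk
        rw [← hvn n] at this
        have := mul_right_cancel₀ (pow_ne_zero n hβ0) (by linear_combination this :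
          gp * v ^ n * β ^ n = gm * β ^ n)
        exact this
      · intro h
        have hx' : gp * α ^ n = gm * β ^ n := by
          rw [← hvn n]
          linear_combination β ^ n * h
        have : s * x n = 0 := by rw [hk, hgp, hgm] at *; linear_combination hx'
        exact (mul_eq_zero.1 this).resolve_left hs0
    have hgpm : gp - gm = s := by rw [hgp, hgm]; ring
    constructor
    · rintro ⟨i, j, hij, hi, hj⟩
      have hi' := (hzero i).1 hi
      have hj' := (hzero j).1 hj
      have hgp0 : gp ≠ 0 := by
        intro h
        rw [h, zero_mul] at hi'
        rw [h, ← hi'] at hgpm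
        simp at hgpm
        exact hs0 hgpm.symm
      refine ⟨h0, ?_⟩
      have hui : v ^ i = gm / gp := by
        field_simp
        linear_combination hi'
      have huj : v ^ j = gm / gp := by
        field_simp
        linear_combination hj'
      rcases (Ne.lt_or_gt hij) with hlt | hlt
      · refine ⟨j - i, j, by omega, by omega, ?_, by rw [huj, hgm, hgp]⟩
        have : v ^ i * v ^ (j - i) = v ^ i * 1 := by
          rw [mul_one, ← pow_add, hui, ← huj]
          congr 1
          omega
        exact mul_left_cancel₀ (pow_ne_zero i hv0) this
      · refine ⟨i - j, i, by omega, by omega, ?_, by rw [hui, hgm, hgp]⟩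
        have : v ^ j * v ^ (i - j) = v ^ j * 1 := by
          rw [mul_one, ← pow_add, huj, ← hui]
          congr 1
          omega
        exact mul_left_cancel₀ (pow_ne_zero j hv0) this
    · rintro ⟨-, p, r, hp, hr, hvp, hvr⟩
      have hvr' : v ^ r = gm / gp := by rw [hvr, hgm, hgp]
      have hgp0 : gp ≠ 0 := by
        intro h
        rw [h, div_zero] at hvr'
        exact pow_ne_zero r hv0 hvr'
      refine ⟨r, r + p, by omega, ?_, ?_⟩
      · exact (hzero r).2 (by rw [hvr', mul_div_cancel₀ _ hgp0])
      · refine (hzero (r + p)).2 ?_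
        rw [pow_add, hvr', hvp, mul_one, mul_div_cancel₀ _ hgp0]
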